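/- Let x, y ∈ ℍ² with x₁ = y₁ (i.e., y - x orthogonal to the boundary line ℝ × {0}). Then τ̃_{ℍ²}(x, y) = log(1 + |x-y| / √(x₂ y₂)). -/

import Mathlib

/-- The scale invariant Cassinian metric
`τ̃_D(x,y) = log(1 + sup_{p ∈ ∂D} |x-y|/√(|x-p||y-p|))`. -/
noncomputable def scTau {E : Type*} [NormedAddCommGroup E] (D : Set E) (x y : E) : ℝ :=
  Real.log (1 + ⨆ p : frontier D, ‖x - y‖ / Real.sqrt (‖x - (p : E)‖ * ‖y - (p : E)‖))

lemma norm_euc2 (z : EuclideanSpace ℝ (Fin 2)) : ‖z‖ = Real.sqrt (z 0 ^ 2 + z 1 ^ 2) := by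
  rw [EuclideanSpace.norm_eq]
  simp [Fin.sum_univ_two, Real.norm_eq_abs, sq_abs]

lemma coord1_le_norm (z : EuclideanSpace ℝ (Fin 2)) : |z 1| ≤ ‖z‖ := by
  rw [norm_euc2, ← Real.sqrt_sq_eq_abs]
  exact Real.sqrt_le_sqrt (by nlinarith [sq_nonneg (z 0)])

lemma frontier_halfplane :
    frontier {z : EuclideanSpace ℝ (Fin 2) | z 1 > 0}
      = {z : EuclideanSpace ℝ (Fin 2) | z 1 = 0} := by
  have hcont : Continuous fun z : EuclideanSpace ℝ (Fin 2) => z 1 :=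
    (EuclideanSpace.proj (𝕜 := ℝ) (1 : Fin 2)).continuous
  have hopen : IsOpen {z : EuclideanSpace ℝ (Fin 2) | z 1 > 0} :=
    isOpen_lt continuous_const hcont
  have hclos : closure {z : EuclideanSpace ℝ (Fin 2) | z 1 > 0}
      = {z : EuclideanSpace ℝ (Fin 2) | 0 ≤ z 1} := by
    apply le_antisymm
    · have heq : {z : EuclideanSpace ℝ (Fin 2) | 0 ≤ z 1}
          = (fun z : EuclideanSpace ℝ (Fin 2) => z 1) ⁻¹' Set.Ici 0 := rfl
      rw [heq]
      exact closure_minimal (fun z hz => (le_of_lt hz : (0:ℝ) ≤ z 1))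
        (isClosed_Ici.preimage hcont)
    · intro z hz
      have htend : Filter.Tendsto
          (fun t : ℝ => z + t • EuclideanSpace.single (1 : Fin 2) (1:ℝ))
          (nhdsWithin 0 (Set.Ioi 0)) (nhds z) := by
        have h0 : Filter.Tendsto
            (fun t : ℝ => z + t • EuclideanSpace.single (1 : Fin 2) (1:ℝ))
            (nhds 0) (nhds (z + (0:ℝ) • EuclideanSpace.single (1 : Fin 2) (1:ℝ))) :=
          (continuous_const.add (continuous_id.smul continuous_const)).tendsto 0
        simpa using h0.mono_left nhdsWithin_le_nhds
      refine mem_closure_of_tendsto htend ?_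
      filter_upwards [self_mem_nhdsWithin] with t ht
      have hcoord : ((z + t • EuclideanSpace.single (1 : Fin 2) (1:ℝ)
          : EuclideanSpace ℝ (Fin 2))) 1 = z 1 + t := by
        simp [PiLp.add_apply, PiLp.smul_apply, EuclideanSpace.single_apply]
      have htpos : (0:ℝ) < t := ht
      show (0:ℝ) < _
      rw [hcoord]
      have hz' : (0:ℝ) ≤ z 1 := hz
      linarith
  rw [frontier, hclos, hopen.interior_eq]
  ext z
  simp only [Set.mem_diff, Set.mem_setOf_eq]
  constructor
  · rintro ⟨h1, h2⟩
    exact le_antisymm (not_lt.mp h2) h1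
  · rintro h1
    exact ⟨h1.ge, by simp [h1]⟩

theorem stmt13 (x y : EuclideanSpace ℝ (Fin 2))
    (hx : x ∈ {z : EuclideanSpace ℝ (Fin 2) | z 1 > 0})
    (hy : y ∈ {z : EuclideanSpace ℝ (Fin 2) | z 1 > 0})
    (h : x 0 = y 0) :
    scTau {z : EuclideanSpace ℝ (Fin 2) | z 1 > 0} x y
      = Real.log (1 + ‖x - y‖ / Real.sqrt (x 1 * y 1)) := by
  have hx1 : (0:ℝ) < x 1 := hx
  have hy1 : (0:ℝ) < y 1 := hy
  set D := {z : EuclideanSpace ℝ (Fin 2) | z 1 > 0} with hD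
  set p₀ : EuclideanSpace ℝ (Fin 2) := WithLp.toLp 2 ![x 0, 0] with hp₀
  have hp₀1 : p₀ 1 = 0 := rfl
  have hp₀0 : p₀ 0 = x 0 := rfl
  have hp₀mem : p₀ ∈ frontier D := by rw [hD, frontier_halfplane]; exact hp₀1
  haveI : Nonempty (frontier D) := ⟨⟨p₀, hp₀mem⟩⟩
  set c : ℝ := ‖x - y‖ / Real.sqrt (x 1 * y 1) with hc
  have hspos : (0:ℝ) < Real.sqrt (x 1 * y 1) := Real.sqrt_pos.mpr (by positivity)
  have key : ∀ p : frontier D,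
      ‖x - y‖ / Real.sqrt (‖x - (p : EuclideanSpace ℝ (Fin 2))‖
        * ‖y - (p : EuclideanSpace ℝ (Fin 2))‖) ≤ c := by
    rintro ⟨p, hp⟩
    have hp1 : p 1 = 0 := by rwa [hD, frontier_halfplane] at hp
    have h1 : x 1 ≤ ‖x - p‖ := by
      have hle := coord1_le_norm (x - p)
      have hxp : (x - p) 1 = x 1 := by simp [PiLp.sub_apply, hp1]
      rw [hxp] at hle
      exact le_trans (le_abs_self _) hle
    have h2 : y 1 ≤ ‖y - p‖ := by
      have hle := coord1_le_norm (y - p)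
      have hyp : (y - p) 1 = y 1 := by simp [PiLp.sub_apply, hp1]
      rw [hyp] at hle
      exact le_trans (le_abs_self _) hle
    rw [hc]
    exact div_le_div_of_nonneg_left (norm_nonneg _) hspos
      (Real.sqrt_le_sqrt (by nlinarith))
  have hval : ‖x - y‖ / Real.sqrt (‖x - p₀‖ * ‖y - p₀‖) = c := by
    have hxp : ‖x - p₀‖ = x 1 := by
      rw [norm_euc2]
      have h0 : (x - p₀) 0 = 0 := by simp [PiLp.sub_apply, hp₀0]
      have h1 : (x - p₀) 1 = x 1 := by simp [PiLp.sub_apply, hp₀1]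
      rw [h0, h1]
      simpa using Real.sqrt_sq hx1.le
    have hyp : ‖y - p₀‖ = y 1 := by
      rw [norm_euc2]
      have h0 : (y - p₀) 0 = 0 := by simp [PiLp.sub_apply, hp₀0, h]
      have h1 : (y - p₀) 1 = y 1 := by simp [PiLp.sub_apply, hp₀1]
      rw [h0, h1]
      simpa using Real.sqrt_sq hy1.le
    rw [hxp, hyp, hc]
  have hsup : (⨆ p : frontier D,
      ‖x - y‖ / Real.sqrt (‖x - (p : EuclideanSpace ℝ (Fin 2))‖
        * ‖y - (p : EuclideanSpace ℝ (Fin 2))‖)) = c := by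
    apply le_antisymm
    · exact ciSup_le key
    · have hb : BddAbove (Set.range fun p : frontier D =>
          ‖x - y‖ / Real.sqrt (‖x - (p : EuclideanSpace ℝ (Fin 2))‖
            * ‖y - (p : EuclideanSpace ℝ (Fin 2))‖)) :=
        ⟨c, by rintro _ ⟨p, rfl⟩; exact key p⟩
      have hle := le_ciSup hb (⟨p₀, hp₀mem⟩ : frontier D)
      rwa [hval] at hle
  rw [scTau, hsup]
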